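/- Let L be a width-w decision list of size m on n variables. For any index i ∈ [m] and β ∈ (0,1): p_L(i)^2 / q_L(1-β, i) ≤ Stab_L(β, i) ≤ p_L(i)^{2/(1+β)}, where Stab_L(β, i) = Pr_{x uniform, y ~ N_β(x)}[IndL(x) = IndL(y) = i], assuming q_L(1-β, i) > 0. -/

import Mathlib

open Finset
open scoped Classical BigOperators

noncomputable section

/-- A term over `n` Boolean variables, given as a partial assignment:
`C i = some b` means the literal `x i = b` appears in the term. -/
abbrev Term (n : ℕ) := Fin n → Option Bool

/-- Satisfaction of a term by an assignment. -/
def TermSat {n : ℕ} (C : Term n) (x : Fin n → Bool) : Prop :=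
  ∀ i b, C i = some b → x i = b

/-- Width of a term: the number of variables it mentions. -/
def termWidth {n : ℕ} (C : Term n) : ℕ :=
  (Finset.univ.filter fun i => C i ≠ none).card

/-- The index function of a decision list with terms `C`:
the first index whose term is satisfied by `x` (and `m` conventionally if none,
since `sInf ∅ = 0`; the default rule hypothesis makes the set nonempty). -/
def DLind {n m : ℕ} (C : Fin m → Term n) (x : Fin n → Bool) : ℕ :=
  sInf {i : ℕ | ∃ h : i < m, TermSat (C ⟨i, h⟩) x}

/-- Evaluation of a decision list with terms `C` and values `v`. -/
def DLeval {n m : ℕ} {V : Type} [Inhabited V] (C : Fin m → Term n)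
    (v : Fin m → V) (x : Fin n → Bool) : V :=
  if h : DLind C x < m then v ⟨DLind C x, h⟩ else default

/-- Probability of an event under the uniform distribution on `{0,1}^n`. -/
def pr (n : ℕ) (P : (Fin n → Bool) → Prop) : ℝ :=
  ((Finset.univ.filter P).card : ℝ) / 2 ^ n

/-- Hit probability of index `i` in the decision list with terms `C`. -/
def pL {n m : ℕ} (C : Fin m → Term n) (i : ℕ) : ℝ :=
  pr n fun x => DLind C x = i

/-- The index function of the sub-decision-list `L|_J`. -/
def DLindSub {n m : ℕ} (C : Fin m → Term n) (J : Finset (Fin m)) (x : Fin n → Bool) : ℕ :=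
  sInf {i : ℕ | ∃ h : i < m, (⟨i, h⟩ : Fin m) ∈ J ∧ TermSat (C ⟨i, h⟩) x}

/-- Evaluation of the sub-decision-list `L|_J`. -/
def DLevalSub {n m : ℕ} {V : Type} [Inhabited V] (C : Fin m → Term n) (v : Fin m → V)
    (J : Finset (Fin m)) (x : Fin n → Bool) : V :=
  if h : DLindSub C J x < m then v ⟨DLindSub C J x, h⟩ else default

/-- A restriction: `some b` fixes a coordinate to `b`, `none` is a star. -/
abbrev Restriction (n : ℕ) := Fin n → Option Bool

/-- `x` is a completion of the restriction `ρ`. -/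
def Compatible {n : ℕ} (ρ : Restriction n) (x : Fin n → Bool) : Prop :=
  ∀ i b, ρ i = some b → x i = b

/-- Number of stars of a restriction. -/
def stars {n : ℕ} (ρ : Restriction n) : ℕ :=
  (Finset.univ.filter fun i => ρ i = none).card

/-- Weight of a restriction under the product distribution `U(n, α)`:
each coordinate independently `*` with probability `α`, and `0` or `1`
each with probability `(1-α)/2`. -/
def restW {n : ℕ} (α : ℝ) (ρ : Restriction n) : ℝ :=
  ∏ i : Fin n, if ρ i = none then α else (1 - α) / 2

/-- Index `i` is useful in the restricted decision list `L↾ρ`: some completion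
of `ρ` hits rule `i`. -/
def Useful {n m : ℕ} (C : Fin m → Term n) (ρ : Restriction n) (i : Fin m) : Prop :=
  ∃ x, Compatible ρ x ∧ DLind C x = i.val

/-- Number of useful indices of `L↾ρ`. -/
def useNum {n m : ℕ} (C : Fin m → Term n) (ρ : Restriction n) : ℕ :=
  (Finset.univ.filter fun i : Fin m => Useful C ρ i).card

/-- `q_L(α, i)`: probability over `ρ ~ U(n, α)` that index `i` is useful in `L↾ρ`. -/
def qL {n m : ℕ} (C : Fin m → Term n) (α : ℝ) (i : Fin m) : ℝ :=
  ∑ ρ : Restriction n, restW α ρ * (if Useful C ρ i then 1 else 0)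

/-- Transition weight of the `β`-noise on a single bit. -/
def noiseW (β : ℝ) (a b : Bool) : ℝ := if a = b then (1 + β) / 2 else (1 - β) / 2

/-- Joint density of `(x, y)` where `x` is uniform and `y ~ N_β(x)`. -/
def pairW {n : ℕ} (β : ℝ) (x y : Fin n → Bool) : ℝ :=
  (1 / 2) ^ n * ∏ i : Fin n, noiseW β (x i) (y i)

/-- `Stab_L(β, i) = Pr[Ind L(x) = Ind L(y) = i]` for `x` uniform, `y ~ N_β(x)`. -/
def StabInd {n m : ℕ} (C : Fin m → Term n) (β : ℝ) (i : Fin m) : ℝ :=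
  ∑ x : Fin n → Bool, ∑ y : Fin n → Bool,
    pairW β x y * (if DLind C x = i.val ∧ DLind C y = i.val then 1 else 0)

/-- `Stab_β(g) = Pr[g(x) = g(y) = 1]` for `x` uniform, `y ~ N_β(x)`. -/
def stab {n : ℕ} (β : ℝ) (g : (Fin n → Bool) → Bool) : ℝ :=
  ∑ x : Fin n → Bool, ∑ y : Fin n → Bool,
    pairW β x y * (if g x = true ∧ g y = true then 1 else 0)

/-- Probability weight that a uniform completion of `ρ` equals `x`. -/
def compW {n : ℕ} (ρ : Restriction n) (x : Fin n → Bool) : ℝ :=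
  if Compatible ρ x then (1 / 2) ^ stars ρ else 0

/-- Evaluation of a DNF with terms `T`. -/
def DNFeval {n M : ℕ} (T : Fin M → Term n) (x : Fin n → Bool) : Prop :=
  ∃ t, TermSat (T t) x

namespace BridgeAux

-- derivative helpers
lemma hasDeriv_one_add (c t : ℝ) (h : (0:ℝ) < 1 + t) :
    HasDerivAt (fun s : ℝ => (1 + s) ^ c) (c * (1 + t) ^ (c - 1)) t := by
  have h1 : HasDerivAt (fun s : ℝ => 1 + s) 1 t := by
    simpa using (hasDerivAt_id t).const_add (1:ℝ)
  have := (Real.hasDerivAt_rpow_const (x := 1 + t) (p := c) (Or.inl h.ne')).comp t h1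
  exact this.congr_deriv (by ring)

lemma hasDeriv_one_sub (c t : ℝ) (h : (0:ℝ) < 1 - t) :
    HasDerivAt (fun s : ℝ => (1 - s) ^ c) (-(c * (1 - t) ^ (c - 1))) t := by
  have h1 : HasDerivAt (fun s : ℝ => 1 - s) (-1) t := by
    simpa using (hasDerivAt_id t).const_sub (1:ℝ)
  have := (Real.hasDerivAt_rpow_const (x := 1 - t) (p := c) (Or.inl h.ne')).comp t h1
  exact this.congr_deriv (by ring)

lemma cont_one_add (c : ℝ) (hc : 0 ≤ c) : Continuous fun s : ℝ => (1 + s) ^ c := by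
  apply continuous_iff_continuousAt.2
  intro x
  exact (Real.continuousAt_rpow_const _ _ (Or.inr hc)).comp (by fun_prop)

lemma cont_one_sub (c : ℝ) (hc : 0 ≤ c) : Continuous fun s : ℝ => (1 - s) ^ c := by
  apply continuous_iff_continuousAt.2
  intro x
  exact (Real.continuousAt_rpow_const _ _ (Or.inr hc)).comp (by fun_prop)

-- G' : (1+t)^p - (1-t)^p ≥ 2 p t on [0,1], p ∈ (0,1]
lemma aux_G' {p : ℝ} (hp0 : 0 < p) (hp1 : p ≤ 1) {t : ℝ} (ht0 : 0 ≤ t) (ht1 : t ≤ 1) :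
    2 * p * t ≤ (1 + t) ^ p - (1 - t) ^ p := by
  set k : ℝ → ℝ := fun s => (1 + s) ^ p - (1 - s) ^ p - 2 * p * s with hk
  have hmono : MonotoneOn k (Set.Icc 0 1) := by
    apply monotoneOn_of_deriv_nonneg (convex_Icc 0 1)
    · exact (((cont_one_add p hp0.le).sub (cont_one_sub p hp0.le)).sub
        (by fun_prop)).continuousOn
    · intro x hx
      rw [interior_Icc] at hx
      have h1 : (0:ℝ) < 1 + x := by linarith [hx.1]
      have h2 : (0:ℝ) < 1 - x := by linarith [hx.2]
      exact (((hasDeriv_one_add p x h1).sub (hasDeriv_one_sub p x h2)).sub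
        ((hasDerivAt_id x).const_mul (2*p))).differentiableAt.differentiableWithinAt
    · intro x hx
      rw [interior_Icc] at hx
      have h1 : (0:ℝ) < 1 + x := by linarith [hx.1]
      have h2 : (0:ℝ) < 1 - x := by linarith [hx.2]
      have hlin : HasDerivAt (fun s : ℝ => 2 * p * s) (2 * p) x := by
        simpa using (hasDerivAt_id x).const_mul (2*p)
      have hd : HasDerivAt k (p * (1 + x) ^ (p - 1) + p * (1 - x) ^ (p - 1) - 2 * p) x := by
        have h' := ((hasDeriv_one_add p x h1).sub (hasDeriv_one_sub p x h2)).sub hlin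
        exact h'.congr_deriv (by ring)
      rw [hd.deriv]
      have key : 2 ≤ (1 + x) ^ (p - 1) + (1 - x) ^ (p - 1) := by
        have hab : (1:ℝ) ≤ (1 + x) ^ (p - 1) * (1 - x) ^ (p - 1) := by
          rw [← Real.mul_rpow (by linarith) (by linarith)]
          apply Real.one_le_rpow_of_pos_of_le_one_of_nonpos
          · nlinarith
          · nlinarith [sq_nonneg x]
          · linarith
        nlinarith [sq_nonneg ((1 + x) ^ (p - 1) - (1 - x) ^ (p - 1)),
          Real.rpow_nonneg (by linarith : (0:ℝ) ≤ 1 + x) (p - 1),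
          Real.rpow_nonneg (by linarith : (0:ℝ) ≤ 1 - x) (p - 1)]
      nlinarith
  have h0 : k 0 = 0 := by simp [hk]
  have := hmono (Set.mem_Icc.2 ⟨le_refl 0, zero_le_one⟩) (Set.mem_Icc.2 ⟨ht0, ht1⟩) ht0
  rw [h0] at this
  simp only [hk] at this
  linarith

-- G : 1 + q(q-1)t²/2 ≤ ((1+t)^q + (1-t)^q)/2  for t ∈ [0,1], 1 < q ≤ 2
lemma aux_G {q : ℝ} (hq1 : 1 < q) (hq2 : q ≤ 2) {t : ℝ} (ht0 : 0 ≤ t) (ht1 : t ≤ 1) :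
    1 + q * (q - 1) / 2 * t ^ 2 ≤ ((1 + t) ^ q + (1 - t) ^ q) / 2 := by
  set k : ℝ → ℝ := fun s => ((1 + s) ^ q + (1 - s) ^ q) / 2 - q * (q - 1) / 2 * s ^ 2 with hk
  have hq0 : (0:ℝ) < q := by linarith
  have hmono : MonotoneOn k (Set.Icc 0 1) := by
    apply monotoneOn_of_deriv_nonneg (convex_Icc 0 1)
    · exact ((((cont_one_add q hq0.le).add (cont_one_sub q hq0.le)).div_const 2).sub
        (by fun_prop)).continuousOn
    · intro x hx
      rw [interior_Icc] at hx
      have h1 : (0:ℝ) < 1 + x := by linarith [hx.1]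
      have h2 : (0:ℝ) < 1 - x := by linarith [hx.2]
      exact ((((hasDeriv_one_add q x h1).add (hasDeriv_one_sub q x h2)).div_const 2).sub
        (((hasDerivAt_pow 2 x)).const_mul (q * (q-1)/2))).differentiableAt.differentiableWithinAt
    · intro x hx
      rw [interior_Icc] at hx
      have h1 : (0:ℝ) < 1 + x := by linarith [hx.1]
      have h2 : (0:ℝ) < 1 - x := by linarith [hx.2]
      have hsq : HasDerivAt (fun s : ℝ => q * (q - 1) / 2 * s ^ 2) (q * (q - 1) * x) x := by
        have := (hasDerivAt_pow 2 x).const_mul (q * (q - 1) / 2)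
        exact this.congr_deriv (by ring)
      have hd : HasDerivAt k
          (q / 2 * ((1 + x) ^ (q - 1) - (1 - x) ^ (q - 1)) - q * (q - 1) * x) x := by
        have h' := (((hasDeriv_one_add q x h1).add (hasDeriv_one_sub q x h2)).div_const 2).sub hsq
        exact h'.congr_deriv (by ring)
      rw [hd.deriv]
      have := aux_G' (p := q - 1) (by linarith) (by linarith) (le_of_lt hx.1) (le_of_lt hx.2)
      nlinarith
  have h0 : k 0 = 1 := by simp [hk]
  have := hmono (Set.mem_Icc.2 ⟨le_refl 0, zero_le_one⟩) (Set.mem_Icc.2 ⟨ht0, ht1⟩) ht0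
  rw [h0] at this
  simp only [hk] at this
  linarith

-- Bernoulli, upper version for exponent ≤ 1
lemma aux_bern {s p : ℝ} (hs : 0 ≤ s) (hp0 : 0 < p) (hp1 : p ≤ 1) :
    (1 + s) ^ p ≤ 1 + p * s := by
  have h1 : 1 + (1/p) * (p * s) ≤ (1 + p * s) ^ (1/p) :=
    one_add_mul_self_le_rpow_one_add (by nlinarith) (by rw [le_div_iff₀ hp0]; linarith)
  have h2 : (1:ℝ) + (1/p) * (p * s) = 1 + s := by field_simp
  rw [h2] at h1
  calc (1 + s) ^ p ≤ ((1 + p * s) ^ (1/p)) ^ p :=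
        Real.rpow_le_rpow (by linarith) h1 hp0.le
    _ = 1 + p * s := by
        rw [← Real.rpow_mul (by nlinarith), one_div_mul_cancel hp0.ne', Real.rpow_one]

-- KSI : for t ∈ [0,1], q = 1+β, β ∈ (0,1):
lemma aux_KSI {β : ℝ} (hβ0 : 0 < β) (hβ1 : β < 1) {t : ℝ} (ht0 : 0 ≤ t) (ht1 : t ≤ 1) :
    ((1+t)/2)^2 + β * ((1-t)/2)^2 ≤ ((1 + t ^ (1+β)) / 2) ^ (2/(1+β)) := by
  set q : ℝ := 1 + β with hq
  have hq1 : 1 < q := by linarith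
  have hq2 : q ≤ 2 := by linarith
  have h1t : (0:ℝ) < 1 + t := by linarith
  set τ : ℝ := (1 - t) / (1 + t) with hτ
  have hτ0 : 0 ≤ τ := div_nonneg (by linarith) h1t.le
  have hτ1 : τ ≤ 1 := by rw [hτ, div_le_one h1t]; linarith
  have hu : ((1+t)/2)^2 + β * ((1-t)/2)^2 = ((1+t)/2)^2 * (1 + β * τ^2) := by
    rw [hτ]
    field_simp
  have hu0 : (0:ℝ) ≤ 1 + β * τ^2 := by positivity
  -- step 1 : (1 + βτ²)^(q/2) ≤ 1 + (q/2)βτ²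
  have hb : (1 + β * τ^2) ^ (q/2) ≤ 1 + q/2 * (β * τ^2) :=
    aux_bern (by positivity) (by positivity) (by rw [div_le_one]; linarith; norm_num)
  -- step 2 : 1 + (q/2)(q-1)τ² ≤ ((1+τ)^q + (1-τ)^q)/2
  have hG : 1 + q * (q - 1) / 2 * τ ^ 2 ≤ ((1 + τ) ^ q + (1 - τ) ^ q) / 2 :=
    aux_G hq1 hq2 hτ0 hτ1
  have hβq : q / 2 * (β * τ^2) = q * (q - 1) / 2 * τ ^ 2 := by rw [hq]; ring
  -- combine : u^(q/2) ≤ (1+t^q)/2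
  have hhalf : (0:ℝ) ≤ (1+t)/2 := by linarith
  have hmain : (((1+t)/2)^2 * (1 + β * τ^2)) ^ (q/2) ≤ (1 + t ^ q) / 2 := by
    rw [Real.mul_rpow (by positivity) hu0]
    have hsq : (((1+t)/2)^2 : ℝ) ^ (q/2) = ((1+t)/2) ^ q := by
      rw [← Real.rpow_natCast ((1+t)/2) 2, ← Real.rpow_mul hhalf]
      congr 1
      push_cast
      ring
    rw [hsq]
    have hcomb : ((1+t)/2) ^ q * ((1 + β * τ^2) ^ (q/2)) ≤
        ((1+t)/2) ^ q * (((1 + τ) ^ q + (1 - τ) ^ q) / 2) := by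
      apply mul_le_mul_of_nonneg_left _ (Real.rpow_nonneg hhalf q)
      calc (1 + β * τ^2) ^ (q/2) ≤ 1 + q/2 * (β * τ^2) := hb
        _ = 1 + q * (q - 1) / 2 * τ ^ 2 := by rw [hβq]
        _ ≤ ((1 + τ) ^ q + (1 - τ) ^ q) / 2 := hG
    refine hcomb.trans (le_of_eq ?_)
    have e1 : ((1+t)/2) ^ q * (1 + τ) ^ q = 1 := by
      rw [← Real.mul_rpow hhalf (by linarith)]
      have : (1+t)/2 * (1 + τ) = 1 := by rw [hτ]; field_simp; ring
      rw [this, Real.one_rpow]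
    have e2 : ((1+t)/2) ^ q * (1 - τ) ^ q = t ^ q := by
      rw [← Real.mul_rpow hhalf (by linarith)]
      congr 1
      rw [hτ]
      field_simp
      ring
    calc ((1+t)/2) ^ q * (((1 + τ) ^ q + (1 - τ) ^ q) / 2)
        = (((1+t)/2) ^ q * (1 + τ) ^ q + ((1+t)/2) ^ q * (1 - τ) ^ q) / 2 := by ring
      _ = (1 + t ^ q) / 2 := by rw [e1, e2]
  -- finish : u ≤ ((1+t^q)/2)^(2/q)
  rw [hu]
  have hu' : (0:ℝ) ≤ ((1+t)/2)^2 * (1 + β * τ^2) := by positivity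
  calc ((1+t)/2)^2 * (1 + β * τ^2)
      = ((((1+t)/2)^2 * (1 + β * τ^2)) ^ (q/2)) ^ (2/q) := by
        rw [← Real.rpow_mul hu']
        rw [show q/2 * (2/q) = 1 by field_simp]
        rw [Real.rpow_one]
    _ ≤ ((1 + t ^ q) / 2) ^ (2/q) :=
        Real.rpow_le_rpow (Real.rpow_nonneg hu' _) hmain (by positivity)

-- TP helper assuming a1 ≤ a0
lemma aux_TP' {β a0 a1 : ℝ} (hβ0 : 0 < β) (hβ1 : β < 1) (h1 : 0 ≤ a1) (h10 : a1 ≤ a0) :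
    ((a0+a1)/2)^2 + β * ((a0-a1)/2)^2 ≤ ((a0 ^ (1+β) + a1 ^ (1+β)) / 2) ^ (2/(1+β)) := by
  set q : ℝ := 1 + β with hq
  have h0 : 0 ≤ a0 := le_trans h1 h10
  rcases eq_or_lt_of_le h0 with h0' | h0'
  · have ha0 : a0 = 0 := h0'.symm
    have ha1 : a1 = 0 := le_antisymm (ha0 ▸ h10) h1
    rw [ha0, ha1]
    have hz : ((0:ℝ) ^ q + 0 ^ q) / 2 = 0 := by
      rw [Real.zero_rpow (by positivity : q ≠ 0)]; norm_num
    rw [hz, Real.zero_rpow (by positivity : 2/q ≠ 0)]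
    norm_num
  · set t : ℝ := a1 / a0 with ht
    have ht0 : 0 ≤ t := div_nonneg h1 h0'.le
    have ht1 : t ≤ 1 := by rw [ht, div_le_one h0']; exact h10
    have key := aux_KSI hβ0 hβ1 ht0 ht1
    have hmul := mul_le_mul_of_nonneg_left key (by positivity : (0:ℝ) ≤ a0^2)
    have e1 : a0^2 * (((1+t)/2)^2 + β * ((1-t)/2)^2)
        = ((a0+a1)/2)^2 + β * ((a0-a1)/2)^2 := by
      rw [ht]
      field_simp
    have e2 : a0^2 * ((1 + t ^ q) / 2) ^ (2/q) = ((a0 ^ q + a1 ^ q) / 2) ^ (2/q) := by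
      have ha2 : a0^2 = (a0 ^ q) ^ (2/q) := by
        rw [← Real.rpow_natCast a0 2, ← Real.rpow_mul h0]
        congr 1
        push_cast
        field_simp
        exact (div_self (by rw [hq]; positivity)).symm
      rw [ha2, ← Real.mul_rpow (Real.rpow_nonneg h0 q) (by positivity)]
      congr 1
      have hth : a0 ^ q * t ^ q = a1 ^ q := by
        rw [← Real.mul_rpow h0 ht0, ht, mul_div_cancel₀ _ h0'.ne']
      rw [← hth]
      ring
    rw [e1, e2] at hmul
    exact hmul

lemma aux_TP {β a0 a1 : ℝ} (hβ0 : 0 < β) (hβ1 : β < 1) (h0 : 0 ≤ a0) (h1 : 0 ≤ a1) :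
    ((a0+a1)/2)^2 + β * ((a0-a1)/2)^2 ≤ ((a0 ^ (1+β) + a1 ^ (1+β)) / 2) ^ (2/(1+β)) := by
  rcases le_total a1 a0 with h | h
  · exact aux_TP' hβ0 hβ1 h1 h
  · have := aux_TP' hβ0 hβ1 h0 h
    calc ((a0+a1)/2)^2 + β * ((a0-a1)/2)^2
        = ((a1+a0)/2)^2 + β * ((a1-a0)/2)^2 := by ring
      _ ≤ ((a1 ^ (1+β) + a0 ^ (1+β)) / 2) ^ (2/(1+β)) := this
      _ = ((a0 ^ (1+β) + a1 ^ (1+β)) / 2) ^ (2/(1+β)) := by rw [add_comm (a1 ^ (1+β))]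

-- two-point two-function hypercontractivity
lemma aux_TPF {β a0 a1 c0 c1 : ℝ} (hβ0 : 0 < β) (hβ1 : β < 1)
    (ha0 : 0 ≤ a0) (ha1 : 0 ≤ a1) (hc0 : 0 ≤ c0) (hc1 : 0 ≤ c1) :
    (1+β)/4 * (a0*c0 + a1*c1) + (1-β)/4 * (a0*c1 + a1*c0) ≤
      ((a0 ^ (1+β) + a1 ^ (1+β)) / 2) ^ (1/(1+β)) *
      ((c0 ^ (1+β) + c1 ^ (1+β)) / 2) ^ (1/(1+β)) := by
  obtain ⟨ρ, hρ2⟩ : ∃ ρ : ℝ, ρ^2 = β := ⟨Real.sqrt β, Real.sq_sqrt hβ0.le⟩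
  set A0 : ℝ := (a0+a1)/2 + ρ*(a0-a1)/2 with hA0
  set A1 : ℝ := (a0+a1)/2 - ρ*(a0-a1)/2 with hA1
  set C0 : ℝ := (c0+c1)/2 + ρ*(c0-c1)/2 with hC0
  set C1 : ℝ := (c0+c1)/2 - ρ*(c0-c1)/2 with hC1
  have hLHS : (1+β)/4 * (a0*c0 + a1*c1) + (1-β)/4 * (a0*c1 + a1*c0)
      = (A0*C0 + A1*C1)/2 := by
    rw [hA0, hA1, hC0, hC1]
    linear_combination (-(a0-a1)*(c0-c1)/4) * hρ2
  have hEA : (A0^2+A1^2)/2 = ((a0+a1)/2)^2 + β * ((a0-a1)/2)^2 := by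
    rw [hA0, hA1]
    linear_combination ((a0-a1)^2/4) * hρ2
  have hEC : (C0^2+C1^2)/2 = ((c0+c1)/2)^2 + β * ((c0-c1)/2)^2 := by
    rw [hC0, hC1]
    linear_combination ((c0-c1)^2/4) * hρ2
  clear_value A0 A1 C0 C1
  have hCS : ((A0*C0 + A1*C1)/2)^2 ≤ ((A0^2+A1^2)/2) * ((C0^2+C1^2)/2) := by
    nlinarith [sq_nonneg (A0*C1 - A1*C0)]
  have hA := aux_TP hβ0 hβ1 ha0 ha1
  have hC := aux_TP hβ0 hβ1 hc0 hc1
  have hL0 : 0 ≤ (A0*C0 + A1*C1)/2 := by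
    rw [← hLHS]
    have h4 : (0:ℝ) ≤ (1+β)/4 := by linarith
    have h4' : (0:ℝ) ≤ (1-β)/4 := by linarith
    have := mul_nonneg h4 (by positivity : (0:ℝ) ≤ a0*c0 + a1*c1)
    have := mul_nonneg h4' (by positivity : (0:ℝ) ≤ a0*c1 + a1*c0)
    linarith
  set Ra : ℝ := (a0 ^ (1+β) + a1 ^ (1+β)) / 2 with hRa
  set Rc : ℝ := (c0 ^ (1+β) + c1 ^ (1+β)) / 2 with hRc
  have hRa0 : 0 ≤ Ra := by positivity
  have hRc0 : 0 ≤ Rc := by positivity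
  have step : ((A0*C0 + A1*C1)/2)^2 ≤ Ra ^ (2/(1+β)) * Rc ^ (2/(1+β)) := by
    refine hCS.trans ?_
    rw [hEA, hEC]
    exact mul_le_mul hA hC (by positivity) (Real.rpow_nonneg hRa0 _)
  rw [hLHS]
  have h2 : (Ra ^ (1/(1+β)) * Rc ^ (1/(1+β)))^2 = Ra ^ (2/(1+β)) * Rc ^ (2/(1+β)) := by
    rw [mul_pow, ← Real.rpow_natCast (Ra ^ (1/(1+β))) 2, ← Real.rpow_natCast (Rc ^ (1/(1+β))) 2,
      ← Real.rpow_mul hRa0, ← Real.rpow_mul hRc0]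
    push_cast
    rw [show 1/(1+β) * 2 = 2/(1+β) by ring]
  have hpos : 0 ≤ Ra ^ (1/(1+β)) * Rc ^ (1/(1+β)) :=
    mul_nonneg (Real.rpow_nonneg hRa0 _) (Real.rpow_nonneg hRc0 _)
  calc (A0*C0 + A1*C1)/2 = Real.sqrt (((A0*C0 + A1*C1)/2)^2) := (Real.sqrt_sq hL0).symm
    _ ≤ Real.sqrt ((Ra ^ (1/(1+β)) * Rc ^ (1/(1+β)))^2) :=
        Real.sqrt_le_sqrt (by rw [h2]; exact step)
    _ = Ra ^ (1/(1+β)) * Rc ^ (1/(1+β)) := Real.sqrt_sq hpos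

-- ## Hypercontractivity induction

lemma sum_cons {n : ℕ} (F : (Fin (n+1) → Bool) → ℝ) :
    ∑ x : Fin (n+1) → Bool, F x = ∑ b : Bool, ∑ x' : Fin n → Bool, F (Fin.cons b x') := by
  rw [← (Fin.consEquiv fun _ : Fin (n+1) => Bool).sum_comp F, Fintype.sum_prod_type]
  rfl

lemma pairW_cons {n : ℕ} (β : ℝ) (b b' : Bool) (x y : Fin n → Bool) :
    pairW β (Fin.cons b x) (Fin.cons b' y)
      = (1/2 * noiseW β b b') * pairW β x y := by
  simp only [pairW, Fin.prod_univ_succ, Fin.cons_zero, Fin.cons_succ, pow_succ]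
  ring

lemma hc_ind {β : ℝ} (hβ0 : 0 < β) (hβ1 : β < 1) :
    ∀ (n : ℕ) (f g : (Fin n → Bool) → ℝ), (∀ x, 0 ≤ f x) → (∀ x, 0 ≤ g x) →
    (∑ x : Fin n → Bool, ∑ y : Fin n → Bool, pairW β x y * (f x * g y)) ≤
      (∑ x : Fin n → Bool, (1/2)^n * f x ^ (1+β)) ^ (1/(1+β)) *
      (∑ x : Fin n → Bool, (1/2)^n * g x ^ (1+β)) ^ (1/(1+β)) := by
  have hq0 : (0:ℝ) < 1 + β := by linarith
  have hqne : (1:ℝ) + β ≠ 0 := hq0.ne'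
  intro n
  induction n with
  | zero =>
      intro f g hf hg
      have hu : ∀ (h : (Fin 0 → Bool) → ℝ), ∑ x : Fin 0 → Bool, h x = h default :=
        fun h => (Fintype.sum_unique h).trans (congrArg h (Subsingleton.elim _ _))
      rw [hu, hu, hu, hu]
      simp only [pairW, pow_zero, one_mul, Finset.univ_eq_empty, Finset.prod_empty]
      have e : ∀ c : ℝ, 0 ≤ c → (c ^ ((1:ℝ)+β)) ^ (1/(1+β)) = c := by
        intro c hc
        rw [← Real.rpow_mul hc, mul_one_div_cancel hqne, Real.rpow_one]
      rw [e _ (hf _), e _ (hg _)]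
  | succ n IH =>
      intro f g hf hg
      set Sa : Bool → ℝ := fun b => ∑ x' : Fin n → Bool, (1/2:ℝ)^n * f (Fin.cons b x') ^ (1+β)
        with hSadef
      set Sc : Bool → ℝ := fun b => ∑ x' : Fin n → Bool, (1/2:ℝ)^n * g (Fin.cons b x') ^ (1+β)
        with hScdef
      have hSa0 : ∀ b, 0 ≤ Sa b := fun b => Finset.sum_nonneg fun x' _ =>
        mul_nonneg (by positivity) (Real.rpow_nonneg (hf _) _)
      have hSc0 : ∀ b, 0 ≤ Sc b := fun b => Finset.sum_nonneg fun x' _ =>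
        mul_nonneg (by positivity) (Real.rpow_nonneg (hg _) _)
      set Na : Bool → ℝ := fun b => Sa b ^ (1/(1+β)) with hNadef
      set Nc : Bool → ℝ := fun b => Sc b ^ (1/(1+β)) with hNcdef
      have hNa0 : ∀ b, 0 ≤ Na b := fun b => Real.rpow_nonneg (hSa0 b) _
      have hNc0 : ∀ b, 0 ≤ Nc b := fun b => Real.rpow_nonneg (hSc0 b) _
      have hNaq : ∀ b, Na b ^ ((1:ℝ)+β) = Sa b := by
        intro b
        rw [hNadef]
        rw [← Real.rpow_mul (hSa0 b), one_div_mul_cancel hqne, Real.rpow_one]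
      have hNcq : ∀ b, Nc b ^ ((1:ℝ)+β) = Sc b := by
        intro b
        rw [hNcdef]
        rw [← Real.rpow_mul (hSc0 b), one_div_mul_cancel hqne, Real.rpow_one]
      have hcoef : ∀ b b' : Bool, (0:ℝ) ≤ 1/2 * noiseW β b b' := by
        intro b b'
        have : (0:ℝ) ≤ noiseW β b b' := by
          unfold noiseW; split <;> linarith
        linarith
      have hfin : ∀ (F : (Fin (n+1) → Bool) → ℝ),
          ∑ x : Fin (n+1) → Bool, (1/2:ℝ)^(n+1) * F x ^ (1+β)
            = ((∑ x' : Fin n → Bool, (1/2:ℝ)^n * F (Fin.cons true x') ^ (1+β))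
               + (∑ x' : Fin n → Bool, (1/2:ℝ)^n * F (Fin.cons false x') ^ (1+β))) / 2 := by
        intro F
        rw [sum_cons (fun x => (1/2:ℝ)^(n+1) * F x ^ (1+β)), Fintype.sum_bool, add_div,
          Finset.sum_div, Finset.sum_div]
        congr 1 <;>
          exact Finset.sum_congr rfl fun x' _ => by rw [pow_succ]; ring
      calc ∑ x : Fin (n+1) → Bool, ∑ y : Fin (n+1) → Bool, pairW β x y * (f x * g y)
          = ∑ b : Bool, ∑ x' : Fin n → Bool, ∑ y : Fin (n+1) → Bool,
              pairW β (Fin.cons b x') y * (f (Fin.cons b x') * g y) :=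
            sum_cons (fun x => ∑ y : Fin (n+1) → Bool, pairW β x y * (f x * g y))
        _ = ∑ b : Bool, ∑ x' : Fin n → Bool, ∑ b' : Bool, ∑ y' : Fin n → Bool,
              ((1/2 * noiseW β b b') * pairW β x' y')
                * (f (Fin.cons b x') * g (Fin.cons b' y')) := by
            refine Finset.sum_congr rfl fun b _ => Finset.sum_congr rfl fun x' _ => ?_
            rw [sum_cons (fun y => pairW β (Fin.cons b x') y * (f (Fin.cons b x') * g y))]
            exact Finset.sum_congr rfl fun b' _ => Finset.sum_congr rfl fun y' _ => by
              rw [pairW_cons]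
        _ = ∑ b : Bool, ∑ b' : Bool, (1/2 * noiseW β b b') *
              (∑ x' : Fin n → Bool, ∑ y' : Fin n → Bool,
                pairW β x' y' * (f (Fin.cons b x') * g (Fin.cons b' y'))) := by
            refine Finset.sum_congr rfl fun b _ => ?_
            rw [Finset.sum_comm]
            refine Finset.sum_congr rfl fun b' _ => ?_
            rw [Finset.mul_sum]
            refine Finset.sum_congr rfl fun x' _ => ?_
            rw [Finset.mul_sum]
            exact Finset.sum_congr rfl fun y' _ => by ring
        _ ≤ ∑ b : Bool, ∑ b' : Bool, (1/2 * noiseW β b b') * (Na b * Nc b') := by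
            refine Finset.sum_le_sum fun b _ => Finset.sum_le_sum fun b' _ => ?_
            refine mul_le_mul_of_nonneg_left ?_ (hcoef b b')
            have := IH (fun x' => f (Fin.cons b x')) (fun y' => g (Fin.cons b' y'))
              (fun x' => hf _) (fun y' => hg _)
            exact this
        _ = (1+β)/4 * (Na true * Nc true + Na false * Nc false)
              + (1-β)/4 * (Na true * Nc false + Na false * Nc true) := by
            rw [Fintype.sum_bool, Fintype.sum_bool, Fintype.sum_bool]
            simp only [noiseW]
            norm_num
            ring
        _ ≤ ((Na true ^ ((1:ℝ)+β) + Na false ^ ((1:ℝ)+β)) / 2) ^ (1/(1+β))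
              * ((Nc true ^ ((1:ℝ)+β) + Nc false ^ ((1:ℝ)+β)) / 2) ^ (1/(1+β)) :=
            aux_TPF hβ0 hβ1 (hNa0 true) (hNa0 false) (hNc0 true) (hNc0 false)
        _ = (∑ x : Fin (n+1) → Bool, (1/2:ℝ)^(n+1) * f x ^ (1+β)) ^ (1/(1+β)) *
            (∑ x : Fin (n+1) → Bool, (1/2:ℝ)^(n+1) * g x ^ (1+β)) ^ (1/(1+β)) := by
            rw [hNaq, hNaq, hNcq, hNcq, hfin f, hfin g]

-- ## Restriction decomposition of the noise kernel

def cFac (o : Option Bool) (b : Bool) : ℝ := o.elim (1/2) (fun c => if b = c then 1 else 0)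

lemma cFac_nonneg (o : Option Bool) (b : Bool) : 0 ≤ cFac o b := by
  cases o with
  | none => norm_num [cFac]
  | some c => simp only [cFac, Option.elim]; split <;> norm_num

lemma compW_eq_prod {n : ℕ} (ρ : Restriction n) (x : Fin n → Bool) :
    compW ρ x = ∏ i : Fin n, cFac (ρ i) (x i) := by
  by_cases h : Compatible ρ x
  · rw [compW, if_pos h, stars]
    rw [← Finset.prod_filter_mul_prod_filter_not Finset.univ (fun i => ρ i = none)
      (fun i => cFac (ρ i) (x i))]
    have h1 : ∏ i ∈ Finset.univ.filter (fun i => ρ i = none), cFac (ρ i) (x i)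
        = (1/2:ℝ) ^ (Finset.univ.filter fun i => ρ i = none).card := by
      rw [Finset.prod_congr rfl (fun i hi => ?_), Finset.prod_const]
      rw [(Finset.mem_filter.1 hi).2]
      rfl
    have h2 : ∏ i ∈ Finset.univ.filter (fun i => ¬ ρ i = none), cFac (ρ i) (x i) = 1 := by
      refine Finset.prod_eq_one fun i hi => ?_
      obtain ⟨c, hc⟩ := Option.ne_none_iff_exists'.1 (Finset.mem_filter.1 hi).2
      rw [hc]
      simp only [cFac, Option.elim]
      rw [if_pos (h i c hc)]
    rw [h1, h2, mul_one]
  · rw [compW, if_neg h]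
    rw [Compatible] at h
    push_neg at h
    obtain ⟨j, b, hj, hb⟩ := h
    symm
    apply Finset.prod_eq_zero (Finset.mem_univ j)
    rw [hj]
    simp only [cFac, Option.elim]
    rw [if_neg hb]

lemma coord_sum {β : ℝ} (a b : Bool) :
    ∑ o : Option Bool, (if o = none then (1-β) else (1-(1-β))/2) * (cFac o a * cFac o b)
      = 1/2 * noiseW β a b := by
  rw [Fintype.sum_option, Fintype.sum_bool]
  cases a <;> cases b <;> simp [cFac, noiseW] <;> ring

lemma coord_sum_one {β : ℝ} (a : Bool) :
    ∑ o : Option Bool, (if o = none then (1-β) else (1-(1-β))/2) * cFac o a = 1/2 := by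
  rw [Fintype.sum_option, Fintype.sum_bool]
  cases a <;> simp [cFac] <;> ring

lemma kernel_id {n : ℕ} (β : ℝ) (x y : Fin n → Bool) :
    ∑ ρ : Restriction n, restW (1-β) ρ * (compW ρ x * compW ρ y) = pairW β x y := by
  have step : ∀ ρ : Restriction n, restW (1-β) ρ * (compW ρ x * compW ρ y)
      = ∏ i : Fin n, ((if ρ i = none then (1-β) else (1-(1-β))/2)
          * (cFac (ρ i) (x i) * cFac (ρ i) (y i))) := by
    intro ρ
    rw [restW, compW_eq_prod, compW_eq_prod, ← Finset.prod_mul_distrib,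
      ← Finset.prod_mul_distrib]
  rw [Finset.sum_congr rfl fun ρ _ => step ρ]
  rw [← Fintype.prod_sum (fun (i : Fin n) (o : Option Bool) =>
    (if o = none then (1-β) else (1-(1-β))/2) * (cFac o (x i) * cFac o (y i)))]
  rw [Finset.prod_congr rfl fun i _ => coord_sum (β := β) (x i) (y i)]
  rw [Finset.prod_mul_distrib, Finset.prod_const, Finset.card_univ, Fintype.card_fin]
  rfl

lemma marg_id {n : ℕ} (β : ℝ) (x : Fin n → Bool) :
    ∑ ρ : Restriction n, restW (1-β) ρ * compW ρ x = (1/2:ℝ)^n := by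
  have step : ∀ ρ : Restriction n, restW (1-β) ρ * compW ρ x
      = ∏ i : Fin n, ((if ρ i = none then (1-β) else (1-(1-β))/2) * cFac (ρ i) (x i)) := by
    intro ρ
    rw [restW, compW_eq_prod, ← Finset.prod_mul_distrib]
  rw [Finset.sum_congr rfl fun ρ _ => step ρ]
  rw [← Fintype.prod_sum (fun (i : Fin n) (o : Option Bool) =>
    (if o = none then (1-β) else (1-(1-β))/2) * cFac o (x i))]
  rw [Finset.prod_congr rfl fun i _ => coord_sum_one (β := β) (x i)]
  rw [Finset.prod_const, Finset.card_univ, Fintype.card_fin]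

lemma restW_nonneg {n : ℕ} {β : ℝ} (hβ0 : 0 < β) (hβ1 : β < 1) (ρ : Restriction n) :
    0 ≤ restW (1-β) ρ := by
  rw [restW]
  apply Finset.prod_nonneg
  intro i _
  split <;> linarith

lemma compW_nonneg {n : ℕ} (ρ : Restriction n) (x : Fin n → Bool) : 0 ≤ compW ρ x := by
  rw [compW]
  split
  · positivity
  · exact le_refl 0

end BridgeAux

theorem bridging_lemma {n m w : ℕ} (C : Fin m → Term n)
    (hw : ∀ j, termWidth (C j) ≤ w)
    (hm : 0 < m) (hlast : C ⟨m - 1, Nat.sub_lt hm one_pos⟩ = fun _ => none)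
    (i : Fin m) (β : ℝ) (hβ0 : 0 < β) (hβ1 : β < 1)
    (hq : 0 < qL C (1 - β) i) :
    pL C i.val ^ 2 / qL C (1 - β) i ≤ StabInd C β i ∧
    StabInd C β i ≤ pL C i.val ^ ((2 : ℝ) / (1 + β)) := by
  classical
  set f : (Fin n → Bool) → ℝ := fun x => if DLind C x = i.val then 1 else 0 with hfdef
  have hf0 : ∀ x, 0 ≤ f x := fun x => by rw [hfdef]; dsimp only; split <;> norm_num
  have hind : ∀ x y : Fin n → Bool,
      (if DLind C x = i.val ∧ DLind C y = i.val then (1:ℝ) else 0) = f x * f y := by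
    intro x y
    rw [hfdef]
    by_cases hx : DLind C x = i.val <;> by_cases hy : DLind C y = i.val <;>
      simp [hx, hy]
  have hstab0 : StabInd C β i
      = ∑ x : Fin n → Bool, ∑ y : Fin n → Bool, pairW β x y * (f x * f y) := by
    rw [StabInd]
    exact Finset.sum_congr rfl fun x _ => Finset.sum_congr rfl fun y _ => by rw [hind]
  have hpsum : pL C i.val = ∑ x : Fin n → Bool, (1/2:ℝ)^n * f x := by
    rw [pL, pr, ← Finset.mul_sum]
    rw [hfdef]
    rw [Finset.sum_boole]
    rw [div_eq_mul_inv, one_div, inv_pow, mul_comm]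
    congr 3
    apply Finset.filter_congr_decidable
  have hpL0 : 0 ≤ pL C i.val := by
    rw [hpsum]
    exact Finset.sum_nonneg fun x _ => mul_nonneg (by positivity) (hf0 x)
  constructor
  · -- lower bound
    set W : Restriction n → ℝ := fun ρ => restW (1-β) ρ with hWdef
    have hW0 : ∀ ρ, 0 ≤ W ρ := fun ρ => BridgeAux.restW_nonneg hβ0 hβ1 ρ
    set Z : Restriction n → ℝ := fun ρ => ∑ x : Fin n → Bool, compW ρ x * f x with hZdef
    have hZU : ∀ ρ, ¬ Useful C ρ i → Z ρ = 0 := by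
      intro ρ h
      refine Finset.sum_eq_zero fun x _ => ?_
      by_cases hc : Compatible ρ x
      · by_cases hd : DLind C x = i.val
        · exact absurd ⟨x, hc, hd⟩ h
        · rw [hfdef]; simp [hd]
      · rw [compW, if_neg hc, zero_mul]
    have hstab : StabInd C β i = ∑ ρ : Restriction n, W ρ * (Z ρ * Z ρ) := by
      rw [hstab0]
      calc ∑ x : Fin n → Bool, ∑ y : Fin n → Bool, pairW β x y * (f x * f y)
          = ∑ x : Fin n → Bool, ∑ y : Fin n → Bool,
              (∑ ρ : Restriction n, W ρ * (compW ρ x * compW ρ y)) * (f x * f y) := by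
            exact Finset.sum_congr rfl fun x _ => Finset.sum_congr rfl fun y _ => by
              rw [BridgeAux.kernel_id β x y]
        _ = ∑ x : Fin n → Bool, ∑ y : Fin n → Bool, ∑ ρ : Restriction n,
              (W ρ * (compW ρ x * compW ρ y)) * (f x * f y) := by
            exact Finset.sum_congr rfl fun x _ => Finset.sum_congr rfl fun y _ => by
              rw [Finset.sum_mul]
        _ = ∑ ρ : Restriction n, ∑ x : Fin n → Bool, ∑ y : Fin n → Bool,
              (W ρ * (compW ρ x * compW ρ y)) * (f x * f y) := by
            rw [Finset.sum_congr rfl fun x (_ : x ∈ Finset.univ) =>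
              Finset.sum_comm (s := Finset.univ) (t := Finset.univ)]
            exact Finset.sum_comm
        _ = ∑ ρ : Restriction n, W ρ * (Z ρ * Z ρ) := by
            refine Finset.sum_congr rfl fun ρ _ => ?_
            rw [hZdef]
            dsimp only
            rw [Finset.sum_mul_sum, Finset.mul_sum]
            refine Finset.sum_congr rfl fun x _ => ?_
            rw [Finset.mul_sum]
            exact Finset.sum_congr rfl fun y _ => by ring
    have hp : pL C i.val = ∑ ρ : Restriction n, W ρ * Z ρ := by
      rw [hpsum]
      calc ∑ x : Fin n → Bool, (1/2:ℝ)^n * f x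
          = ∑ x : Fin n → Bool, (∑ ρ : Restriction n, W ρ * compW ρ x) * f x := by
            exact Finset.sum_congr rfl fun x _ => by rw [BridgeAux.marg_id β x]
        _ = ∑ x : Fin n → Bool, ∑ ρ : Restriction n, (W ρ * compW ρ x) * f x := by
            exact Finset.sum_congr rfl fun x _ => by rw [Finset.sum_mul]
        _ = ∑ ρ : Restriction n, ∑ x : Fin n → Bool, (W ρ * compW ρ x) * f x :=
            Finset.sum_comm
        _ = ∑ ρ : Restriction n, W ρ * Z ρ := by
            refine Finset.sum_congr rfl fun ρ _ => ?_
            rw [hZdef]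
            dsimp only
            rw [Finset.mul_sum]
            exact Finset.sum_congr rfl fun x _ => by ring
    have hqL : qL C (1-β) i
        = ∑ ρ : Restriction n, W ρ * (if Useful C ρ i then 1 else 0) := rfl
    have hCS := Finset.sum_mul_sq_le_sq_mul_sq Finset.univ
      (fun ρ : Restriction n => Real.sqrt (W ρ) * Z ρ)
      (fun ρ : Restriction n => Real.sqrt (W ρ) * (if Useful C ρ i then 1 else 0))
    have e1 : ∑ ρ : Restriction n,
        (Real.sqrt (W ρ) * Z ρ) * (Real.sqrt (W ρ) * (if Useful C ρ i then 1 else 0))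
          = ∑ ρ : Restriction n, W ρ * Z ρ := by
      refine Finset.sum_congr rfl fun ρ _ => ?_
      by_cases hu : Useful C ρ i
      · rw [if_pos hu, mul_one]
        rw [show Real.sqrt (W ρ) * Z ρ * Real.sqrt (W ρ)
            = Real.sqrt (W ρ) * Real.sqrt (W ρ) * Z ρ by ring]
        rw [Real.mul_self_sqrt (hW0 ρ)]
      · rw [if_neg hu, hZU ρ hu]
        ring
    have e2 : ∑ ρ : Restriction n, (Real.sqrt (W ρ) * Z ρ)^2
        = ∑ ρ : Restriction n, W ρ * (Z ρ * Z ρ) := by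
      refine Finset.sum_congr rfl fun ρ _ => ?_
      rw [mul_pow, Real.sq_sqrt (hW0 ρ)]
      ring
    have e3 : ∑ ρ : Restriction n, (Real.sqrt (W ρ) * (if Useful C ρ i then 1 else 0))^2
        = ∑ ρ : Restriction n, W ρ * (if Useful C ρ i then 1 else 0) := by
      refine Finset.sum_congr rfl fun ρ _ => ?_
      rw [mul_pow, Real.sq_sqrt (hW0 ρ)]
      by_cases hu : Useful C ρ i <;> simp [hu]
    rw [e1, e2, e3, ← hp, ← hstab, ← hqL] at hCS
    rw [div_le_iff₀ hq]
    exact hCS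
  · -- upper bound
    have key := BridgeAux.hc_ind hβ0 hβ1 n f f hf0 hf0
    have hfq : ∀ x, f x ^ ((1:ℝ)+β) = f x := by
      intro x
      rw [hfdef]
      dsimp only
      split
      · rw [Real.one_rpow]
      · rw [Real.zero_rpow (by positivity)]
    have hsum : ∑ x : Fin n → Bool, (1/2:ℝ)^n * f x ^ ((1:ℝ)+β) = pL C i.val := by
      rw [hpsum]
      exact Finset.sum_congr rfl fun x _ => by rw [hfq]
    rw [hsum] at key
    rw [hstab0]
    refine key.trans (le_of_eq ?_)
    rw [← pow_two, ← Real.rpow_natCast (pL C i.val ^ ((1:ℝ)/(1+β))) 2,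
      ← Real.rpow_mul hpL0]
    congr 1
    push_cast
    field_simp
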